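/- Let G = ⟨σ⟩ be a finite cyclic group of order n, and consider the Cayley graph Cay(G, {σ}) with vertex set G and edges g → gσ. Then Fl(G, {σ}) ≅ ℤ with trivial G-action. More generally, for any S ⊆ G containing σ (with σ a generator), Fl(Cay(G, S)) ≅ ℤ ⊕ (ℤG)^{|S|-1} as G-lattices; in particular Fl(Cay(G, S)) is a permutation G-lattice. -/

import Mathlib

structure DiGraph (V E : Type*) where
  src : E → V
  tgt : E → V

noncomputable def DiGraph.boundary {V E : Type*} [Fintype E] [DecidableEq V]
    (X : DiGraph V E) : (E → ℤ) →ₗ[ℤ] (V → ℤ) where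
  toFun f := fun v =>
    ∑ e, f e * ((if X.tgt e = v then 1 else 0) - (if X.src e = v then 1 else 0))
  map_add' f g := by
    funext v
    simp [add_mul, Finset.sum_add_distrib]
  map_smul' c f := by
    funext v
    simp [Finset.mul_sum, mul_assoc]

/-- The multiplicative group structure on `AddAut A` of the older Mathlib (composition). -/
instance AddAut.instGroupOfComp {A : Type*} [Add A] : Group (AddAut A) where
  mul g h := AddEquiv.trans h g
  one := AddEquiv.refl _
  inv := AddEquiv.symm
  mul_assoc _ _ _ := rfl
  one_mul _ := rfl
  mul_one _ := rfl
  inv_mul_cancel := AddEquiv.self_trans_symm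

@[simp]
theorem AddAut.mul_apply_ofComp {A : Type*} [Add A] (e₁ e₂ : AddAut A) (m : A) :
    (e₁ * e₂) m = e₁ (e₂ m) := rfl

@[simp]
theorem AddAut.one_apply_ofComp {A : Type*} [Add A] (m : A) : (1 : AddAut A) m = m := rfl

/-- The shift of a function on edges by a permutation: `(π • f) e = f (π⁻¹ e)`. -/
def eshift {E : Type*} (π : Equiv.Perm E) (f : E → ℤ) : E → ℤ := fun e => f (π⁻¹ e)

theorem eshift_flow_mem {V E : Type*} [Fintype E] [DecidableEq V] (X : DiGraph V E)
    {G : Type*} [Group G] (actV : G →* Equiv.Perm V) (actE : G →* Equiv.Perm E)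
    (hsrc : ∀ g e, X.src (actE g e) = actV g (X.src e))
    (htgt : ∀ g e, X.tgt (actE g e) = actV g (X.tgt e))
    (g : G) {f : E → ℤ} (hf : f ∈ LinearMap.ker X.boundary) :
    eshift (actE g) f ∈ LinearMap.ker X.boundary := by
  rw [LinearMap.mem_ker] at hf ⊢
  funext v
  have h0 : X.boundary f ((actV g)⁻¹ v) = 0 := by rw [hf]; rfl
  simp only [DiGraph.boundary, LinearMap.coe_mk, AddHom.coe_mk, eshift, Pi.zero_apply] at h0 ⊢
  rw [← Equiv.sum_comp (actE g) (fun e => f ((actE g)⁻¹ e) *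
      ((if X.tgt e = v then 1 else 0) - (if X.src e = v then 1 else 0)))]
  refine Eq.trans (Finset.sum_congr rfl ?_) h0
  intro e _
  simp only [show ∀ x, (actE g)⁻¹ (actE g x) = x from fun x => (actE g).symm_apply_apply x, htgt, hsrc]
  congr 2
  · by_cases h : X.tgt e = (actV g)⁻¹ v
    · simp [h]
    · have h2 : actV g (X.tgt e) ≠ v := fun hc => h (by rw [← hc]; simp)
      simp [h, h2]; exact h
  · by_cases h : X.src e = (actV g)⁻¹ v
    · simp [h]
    · have h2 : actV g (X.src e) ≠ v := fun hc => h (by rw [← hc]; simp)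
      simp [h, h2]; exact h

/-- The `G`-lattice structure on the flow lattice induced by a graph action. -/
noncomputable def flowRep {V E : Type*} [Fintype E] [DecidableEq V] (X : DiGraph V E)
    {G : Type*} [Group G] (actV : G →* Equiv.Perm V) (actE : G →* Equiv.Perm E)
    (hsrc : ∀ g e, X.src (actE g e) = actV g (X.src e))
    (htgt : ∀ g e, X.tgt (actE g e) = actV g (X.tgt e)) :
    G →* AddAut ↥(LinearMap.ker X.boundary) where
  toFun g :=
    { toFun := fun f => ⟨eshift (actE g) f, eshift_flow_mem X actV actE hsrc htgt g f.2⟩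
      invFun := fun f => ⟨eshift (actE g⁻¹) f, eshift_flow_mem X actV actE hsrc htgt g⁻¹ f.2⟩
      left_inv := by
        intro f; ext e
        simp [eshift]
      right_inv := by
        intro f; ext e
        simp [eshift]
      map_add' := by
        intro a b; ext e
        simp [eshift] }
  map_one' := by
    ext f e
    simp [eshift]
  map_mul' := by
    intro g h
    ext f e
    simp [eshift, mul_inv_rev]




/-- The directed Cayley graph of `G` with respect to `S`: an edge `g → g·s`
for every `g ∈ G`, `s ∈ S`. -/
def cayley (G : Type*) [Group G] (S : Finset G) : DiGraph G (G × ↥S) where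
  src p := p.1
  tgt p := p.1 * ↑p.2

/-- Left multiplication action of `G` on the edges `G × T` of a Cayley-type graph. -/
def cayAct (G : Type*) [Group G] (T : Type*) : G →* Equiv.Perm (G × T) where
  toFun g := Equiv.prodCongr (Equiv.mulLeft g) (Equiv.refl T)
  map_one' := by ext p <;> simp
  map_mul' := by intro g h; ext p <;> simp [mul_assoc]

theorem cayley_src_equivariant (G : Type*) [Group G] (S : Finset G) (g : G) (e : G × ↥S) :
    (cayley G S).src (cayAct G ↥S g e) = MulAction.toPermHom G G g ((cayley G S).src e) := rfl

theorem cayley_tgt_equivariant (G : Type*) [Group G] (S : Finset G) (g : G) (e : G × ↥S) :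
    (cayley G S).tgt (cayAct G ↥S g e) = MulAction.toPermHom G G g ((cayley G S).tgt e) := by
  show (g * e.1) * ↑e.2 = g * (e.1 * ↑e.2)
  rw [mul_assoc]

/-- The permutation action of `G` on `ι → ℤ` induced by an action on `ι`. -/
def permAut {G ι : Type*} [Group G] (act : G →* Equiv.Perm ι) : G →* AddAut (ι → ℤ) where
  toFun g :=
    { toEquiv := Equiv.arrowCongr (act g) (Equiv.refl ℤ)
      map_add' := fun _ _ => rfl }
  map_one' := by ext f i; simp [AddEquiv.coe_mk, Equiv.arrowCongr_apply]; rfl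
  map_mul' := by
    intro g h; ext f i
    simp only [map_mul]; rfl

/-- `ρ` is a permutation representation. -/
def IsPermutationRep {G M : Type*} [Group G] [AddCommGroup M] (ρ : G →* AddAut M) : Prop :=
  ∃ (ι : Type) (_ : Fintype ι) (act : G →* Equiv.Perm ι) (e : M ≃+ (ι → ℤ)),
    ∀ (g : G) (m : M), e (ρ g m) = permAut act g (e m)

section Dlog
variable {G : Type*} [Group G] [Fintype G] [DecidableEq G]

open Classical in
/-- Discrete logarithm base `σ`: the least `k` with `σ ^ k = x` (0 if none). -/
noncomputable def dlog (σ x : G) : ℕ := if h : ∃ k : ℕ, σ ^ k = x then Nat.find h else 0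

variable {σ : G} (hgen : ∀ x : G, x ∈ Subgroup.zpowers σ)
include hgen

lemma exists_pow_eq (x : G) : ∃ k : ℕ, σ ^ k = x := by
  obtain ⟨m, hm⟩ := hgen x
  have hn : 0 < orderOf σ := orderOf_pos σ
  refine ⟨(m % (orderOf σ : ℤ)).toNat, ?_⟩
  have h1 : ((m % (orderOf σ : ℤ)).toNat : ℤ) = m % (orderOf σ : ℤ) :=
    Int.toNat_of_nonneg (Int.emod_nonneg m (by exact_mod_cast hn.ne'))
  calc σ ^ (m % (orderOf σ : ℤ)).toNat
      = σ ^ (((m % (orderOf σ : ℤ)).toNat : ℤ)) := (zpow_natCast σ _).symm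
    _ = σ ^ (m % (orderOf σ : ℤ)) := by rw [h1]
    _ = σ ^ m := zpow_mod_orderOf σ m
    _ = x := hm

lemma pow_dlog (x : G) : σ ^ dlog σ x = x := by
  rw [dlog, dif_pos (exists_pow_eq hgen x)]
  exact Nat.find_spec (exists_pow_eq hgen x)

omit hgen in
lemma dlog_le {x : G} {k : ℕ} (h : σ ^ k = x) : dlog σ x ≤ k := by
  rw [dlog, dif_pos ⟨k, h⟩]
  exact Nat.find_le h

omit hgen in
lemma dlog_one : dlog σ (1 : G) = 0 := Nat.le_zero.mp (dlog_le (pow_zero σ))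

lemma dlog_lt (x : G) : dlog σ x < orderOf σ := by
  have hn : 0 < orderOf σ := orderOf_pos σ
  rcases lt_or_ge (dlog σ x) (orderOf σ) with h | h
  · exact h
  · exfalso
    have h2 : σ ^ (dlog σ x - orderOf σ) = x := by
      have h3 := pow_dlog hgen x
      rwa [← Nat.sub_add_cancel h, pow_add, pow_orderOf_eq_one, mul_one] at h3
    have := dlog_le h2
    omega

lemma dlog_pow {k : ℕ} (hk : k < orderOf σ) : dlog σ (σ ^ k) = k := by
  have h1 : dlog σ (σ ^ k) ≤ k := dlog_le rfl
  rcases h1.lt_or_eq with h | h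
  · exfalso
    have hd := pow_dlog hgen (σ ^ k)
    have h4 : σ ^ (dlog σ (σ ^ k) + (k - dlog σ (σ ^ k))) = σ ^ (dlog σ (σ ^ k)) := by
      rw [Nat.add_sub_cancel' h1, hd]
    rw [pow_add] at h4
    have h2 : σ ^ (k - dlog σ (σ ^ k)) = 1 := mul_left_cancel (h4.trans (mul_one _).symm)
    have h5 := Nat.le_of_dvd (by omega) (orderOf_dvd_of_pow_eq_one h2)
    omega
  · exact h

lemma dlog_inv : dlog σ σ⁻¹ = orderOf σ - 1 := by
  have hn : 0 < orderOf σ := orderOf_pos σ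
  have h1 : σ ^ (orderOf σ - 1) = σ⁻¹ := by
    apply eq_inv_of_mul_eq_one_left
    rw [← pow_succ, Nat.sub_add_cancel hn, pow_orderOf_eq_one]
  rw [← h1, dlog_pow hgen (by omega)]

lemma dlog_mul_self (u : G) : dlog σ (u * σ) = if u = σ⁻¹ then 0 else dlog σ u + 1 := by
  split_ifs with h
  · subst h; simp [dlog_one]
  · have hle : dlog σ (u * σ) ≤ dlog σ u + 1 :=
      dlog_le (by rw [pow_succ, pow_dlog hgen])
    have hge : dlog σ u + 1 ≤ dlog σ (u * σ) := by
      have h0 : dlog σ (u * σ) ≠ 0 := by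
        intro h0
        have h2 := pow_dlog hgen (u * σ)
        rw [h0, pow_zero] at h2
        exact h (eq_inv_of_mul_eq_one_left h2.symm)
      have h2 := pow_dlog hgen (u * σ)
      rw [show dlog σ (u * σ) = (dlog σ (u * σ) - 1) + 1 by omega, pow_succ] at h2
      have h3 : σ ^ (dlog σ (u * σ) - 1) = u := mul_right_cancel h2
      have := dlog_le h3
      omega
    omega

end Dlog

section Coeff
variable {G : Type*} [Group G] [Fintype G] [DecidableEq G]
variable {σ : G} (hgen : ∀ x : G, x ∈ Subgroup.zpowers σ)

lemma solve_g {a b x g : G} : a * g⁻¹ * b = x ↔ g = b * x⁻¹ * a := by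
  constructor
  · rintro rfl; group
  · rintro rfl; group

include hgen

set_option linter.unusedSectionVars false

lemma coeff_eq (s h g : G) :
    ((if dlog σ (s⁻¹ * g⁻¹ * (h * σ)) < dlog σ s⁻¹ then (1:ℤ) else 0)
      - (if dlog σ (s⁻¹ * g⁻¹ * h) < dlog σ s⁻¹ then (1:ℤ) else 0))
    = (if g = h * σ * s⁻¹ then (1:ℤ) else 0) - (if g = h * σ then (1:ℤ) else 0) := by
  have hK : σ ^ dlog σ s⁻¹ = s⁻¹ := pow_dlog hgen s⁻¹
  have hKlt : dlog σ s⁻¹ < orderOf σ := dlog_lt hgen s⁻¹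
  set K := dlog σ s⁻¹ with hKdef
  have hassoc : s⁻¹ * g⁻¹ * (h * σ) = (s⁻¹ * g⁻¹ * h) * σ := by group
  rw [hassoc, dlog_mul_self hgen]
  have hg1 : (s⁻¹ * g⁻¹ * h = σ⁻¹) ↔ (g = h * σ * s⁻¹) := by
    rw [solve_g, inv_inv]
  have hg2 : (g = h * σ) ↔ (s⁻¹ * g⁻¹ * h = σ ^ K * σ⁻¹) := by
    rw [solve_g]
    constructor
    · intro hh; rw [hh, hK]; group
    · intro hh; rw [hh, hK]; group
  by_cases h1 : s⁻¹ * g⁻¹ * h = σ⁻¹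
  · rw [if_pos h1, h1, dlog_inv hgen]
    rw [if_neg (by omega : ¬ (orderOf σ - 1 < K))]
    rw [if_pos (hg1.mp h1)]
    have hg2' : (g = h * σ) ↔ (σ ^ K = 1) := by
      rw [hg2, h1]
      constructor
      · intro hh
        have : σ ^ K * σ⁻¹ * σ = σ⁻¹ * σ := by rw [← hh]
        simpa using this
      · intro hh; rw [hh]; group
    by_cases hK0 : K = 0
    · rw [if_pos (hg2'.mpr (by rw [hK0, pow_zero])), if_neg (by omega)]
      norm_num
    · have : σ ^ K ≠ 1 := fun hh => by
        have := Nat.le_of_dvd (by omega) (orderOf_dvd_of_pow_eq_one hh); omega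
      rw [if_neg (fun hh => this (hg2'.mp hh)), if_pos (by omega)]
  · rw [if_neg h1, if_neg (fun hh => h1 (hg1.mpr hh))]
    by_cases h2 : g = h * σ
    · have hu : s⁻¹ * g⁻¹ * h = σ ^ K * σ⁻¹ := hg2.mp h2
      have hK0 : K ≠ 0 := by
        intro hh; rw [hh, pow_zero, one_mul] at hu; exact h1 hu
      have hpow : σ ^ (K - 1) = σ ^ K * σ⁻¹ := by
        rw [eq_mul_inv_iff_mul_eq, ← pow_succ]
        congr 1
        omega
      have hdu : dlog σ (s⁻¹ * g⁻¹ * h) = K - 1 := by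
        rw [hu, ← hpow, dlog_pow hgen (by omega)]
      rw [hdu, if_pos h2]
      rw [if_neg (by omega), if_pos (by omega)]
    · rw [if_neg h2]
      have hu : s⁻¹ * g⁻¹ * h ≠ σ ^ K * σ⁻¹ := fun hh => h2 (hg2.mpr hh)
      have hud := pow_dlog hgen (s⁻¹ * g⁻¹ * h)
      by_cases h3 : dlog σ (s⁻¹ * g⁻¹ * h) < K
      · have h4 : dlog σ (s⁻¹ * g⁻¹ * h) + 1 < K := by
          rcases Nat.lt_or_ge (dlog σ (s⁻¹ * g⁻¹ * h) + 1) K with h5 | h5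
          · exact h5
          · exfalso
            have hKeq : dlog σ (s⁻¹ * g⁻¹ * h) = K - 1 := by omega
            have hpow : σ ^ (K - 1) = σ ^ K * σ⁻¹ := by
              rw [eq_mul_inv_iff_mul_eq, ← pow_succ]
              congr 1
              omega
            exact hu (by rw [← hud, hKeq, hpow])
        rw [if_pos h4, if_pos h3]
        norm_num
      · rw [if_neg (by omega), if_neg h3]

end Coeff

section Flow

set_option linter.unusedSectionVars false
set_option maxHeartbeats 1000000

variable {G : Type*} [Group G] [Fintype G] [DecidableEq G]
variable (σ : G) (S : Finset G)

/-- The correction sum: total contribution of cycle paths through σ-edges at `h`. -/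
noncomputable def corr (f : G × ↥S → ℤ) (h : G) : ℤ :=
  ∑ e : G × ↥S, if (e.2 : G) ≠ σ ∧
      dlog σ ((e.2 : G)⁻¹ * e.1⁻¹ * h) < dlog σ (e.2 : G)⁻¹ then f e else 0

noncomputable def Afun (hσS : σ ∈ S) (f : G × ↥S → ℤ) (h : G) : ℤ :=
  f (h, ⟨σ, hσS⟩) - corr σ S f h

variable {σ S}

lemma sum_ite_ne (hσS : σ ∈ S) (u : ↥S → ℤ) :
    ∑ s : ↥S, (if (s : G) ≠ σ then u s else 0) = (∑ s : ↥S, u s) - u ⟨σ, hσS⟩ := by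
  have key : ∀ s : ↥S, (if (s : G) ≠ σ then u s else 0)
      = u s - (if s = ⟨σ, hσS⟩ then u s else 0) := by
    intro s
    by_cases hs : s = (⟨σ, hσS⟩ : ↥S)
    · subst hs; simp
    · have h2 : (s : G) ≠ σ := fun hh => hs (Subtype.ext hh)
      simp [h2, hs]
  rw [Finset.sum_congr rfl (fun s _ => key s), Finset.sum_sub_distrib,
    Finset.sum_ite_eq' Finset.univ (⟨σ, hσS⟩ : ↥S) u, if_pos (Finset.mem_univ _)]

lemma sum_ite_sigma (hσS : σ ∈ S) (x : ℤ) :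
    ∑ s : ↥S, (if (s : G) = σ then x else 0) = x := by
  have key : ∀ s : ↥S, (if (s : G) = σ then x else 0)
      = (if s = ⟨σ, hσS⟩ then x else 0) := by
    intro s
    by_cases hs : s = (⟨σ, hσS⟩ : ↥S)
    · subst hs; simp
    · rw [if_neg (fun hh => hs (Subtype.ext hh)), if_neg hs]
  rw [Finset.sum_congr rfl (fun s _ => key s),
    Finset.sum_ite_eq' Finset.univ (⟨σ, hσS⟩ : ↥S) (fun _ => x), if_pos (Finset.mem_univ _)]

lemma boundary_apply (f : G × ↥S → ℤ) (v : G) :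
    (cayley G S).boundary f v
      = (∑ s : ↥S, f (v * (s : G)⁻¹, s)) - ∑ s : ↥S, f (v, s) := by
  have key : ∀ s : ↥S,
      (∑ g : G, f (g, s) * ((if g * (s : G) = v then (1:ℤ) else 0) - (if g = v then 1 else 0)))
      = f (v * (s : G)⁻¹, s) - f (v, s) := by
    intro s
    have h1 : ∀ g : G, f (g, s) * ((if g * (s : G) = v then (1:ℤ) else 0) - (if g = v then 1 else 0))
        = (if g = v * (s : G)⁻¹ then f (g, s) else 0) - (if g = v then f (g, s) else 0) := by
      intro g
      rw [mul_sub]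
      congr 1
      · by_cases hh : g * (s : G) = v
        · rw [if_pos hh, if_pos (by rw [← hh]; group), mul_one]
        · rw [if_neg hh, if_neg (fun hc => hh (by rw [hc]; group)), mul_zero]
      · by_cases hh : g = v
        · rw [if_pos hh, if_pos hh, mul_one]
        · rw [if_neg hh, if_neg hh, mul_zero]
    rw [Finset.sum_congr rfl (fun g _ => h1 g), Finset.sum_sub_distrib,
      Finset.sum_ite_eq' Finset.univ (v * (s : G)⁻¹) (fun g => f (g, s)),
      Finset.sum_ite_eq' Finset.univ v (fun g => f (g, s)),
      if_pos (Finset.mem_univ _), if_pos (Finset.mem_univ _)]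
  show (∑ e : G × ↥S, f e * ((if e.1 * (e.2 : G) = v then (1:ℤ) else 0)
      - (if e.1 = v then 1 else 0))) = _
  rw [Fintype.sum_prod_type_right, Finset.sum_congr rfl (fun s _ => key s),
    Finset.sum_sub_distrib]

variable (hgen : ∀ x : G, x ∈ Subgroup.zpowers σ)

include hgen in
lemma corr_step (f : G × ↥S → ℤ) (h : G) :
    corr σ S f (h * σ) - corr σ S f h
      = ∑ s : ↥S, (if (s : G) ≠ σ then f (h * σ * (s : G)⁻¹, s) - f (h * σ, s) else 0) := by
  rw [corr, corr, ← Finset.sum_sub_distrib, Fintype.sum_prod_type_right]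
  refine Finset.sum_congr rfl (fun s _ => ?_)
  by_cases hs : (s : G) ≠ σ
  · rw [if_pos hs]
    have h1 : ∀ g : G,
        ((if (s : G) ≠ σ ∧ dlog σ ((s:G)⁻¹ * g⁻¹ * (h * σ)) < dlog σ (s:G)⁻¹ then f (g, s) else 0)
          - (if (s : G) ≠ σ ∧ dlog σ ((s:G)⁻¹ * g⁻¹ * h) < dlog σ (s:G)⁻¹ then f (g, s) else 0))
        = (if g = h * σ * (s:G)⁻¹ then f (g, s) else 0) - (if g = h * σ then f (g, s) else 0) := by
      intro g
      have e1 : ∀ (Q : Prop), (((s : G) ≠ σ ∧ Q)) ↔ Q := fun Q => and_iff_right hs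
      have conv1 : ∀ (Q : Prop) (_ : Decidable Q) (x : ℤ),
          (if Q then x else 0) = (if Q then (1:ℤ) else 0) * x := by
        intro Q i x; split <;> simp
      simp only [e1]
      rw [conv1 _ _ (f (g, s)), conv1 _ _ (f (g, s)), conv1 _ _ (f (g, s)), conv1 _ _ (f (g, s)),
        ← sub_mul, ← sub_mul, coeff_eq hgen (s : G) h g]
    rw [Finset.sum_congr rfl (fun g _ => h1 g), Finset.sum_sub_distrib,
      Finset.sum_ite_eq' Finset.univ (h * σ * (s:G)⁻¹) (fun g => f (g, s)),
      Finset.sum_ite_eq' Finset.univ (h * σ) (fun g => f (g, s)),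
      if_pos (Finset.mem_univ _), if_pos (Finset.mem_univ _)]
  · rw [if_neg hs]
    refine Finset.sum_eq_zero (fun g _ => ?_)
    rw [if_neg (fun hc => hs hc.1), if_neg (fun hc => hs hc.1), sub_zero]

include hgen in
lemma Afun_step (hσS : σ ∈ S) {f : G × ↥S → ℤ}
    (hf : f ∈ LinearMap.ker (cayley G S).boundary) (h : G) :
    Afun σ S hσS f (h * σ) = Afun σ S hσS f h := by
  have hb : (cayley G S).boundary f (h * σ) = 0 := by
    rw [LinearMap.mem_ker] at hf; rw [hf]; rfl
  rw [boundary_apply] at hb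
  have hcs := corr_step hgen f h
  rw [sum_ite_ne hσS] at hcs
  rw [Finset.sum_sub_distrib] at hcs
  have hsimp : h * σ * ((⟨σ, hσS⟩ : ↥S) : G)⁻¹ = h := by
    show h * σ * σ⁻¹ = h; group
  rw [hsimp] at hcs
  rw [Afun, Afun]
  linarith [hb, hcs]

include hgen in
lemma Afun_const (hσS : σ ∈ S) {f : G × ↥S → ℤ}
    (hf : f ∈ LinearMap.ker (cayley G S).boundary) (h : G) :
    Afun σ S hσS f h = Afun σ S hσS f 1 := by
  have key : ∀ k : ℕ, Afun σ S hσS f (σ ^ k) = Afun σ S hσS f 1 := by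
    intro k
    induction k with
    | zero => rw [pow_zero]
    | succ k ih => rw [pow_succ, Afun_step hgen hσS hf, ih]
  rw [← pow_dlog hgen h, key]

variable (σ S)

/-- Index equivalence for the non-σ part of `S`. -/
noncomputable def idx (hσS : σ ∈ S) : ↥(S.erase σ) ≃ Fin (S.card - 1) :=
  Finset.equivFinOfCardEq (Finset.card_erase_of_mem hσS)

noncomputable def Bfun (hσS : σ ∈ S) (b : Fin (S.card - 1) → G → ℤ) : G × ↥S → ℤ :=
  fun e => if hs : (e.2 : G) = σ then 0
    else b (idx σ S hσS ⟨(e.2 : G), Finset.mem_erase.mpr ⟨hs, e.2.2⟩⟩) e.1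

noncomputable def Fflow (hσS : σ ∈ S) (a : ℤ) (b : Fin (S.card - 1) → G → ℤ) : G × ↥S → ℤ :=
  fun e => if hs : (e.2 : G) = σ then a + corr σ S (Bfun σ S hσS b) e.1
    else b (idx σ S hσS ⟨(e.2 : G), Finset.mem_erase.mpr ⟨hs, e.2.2⟩⟩) e.1

noncomputable def bOf (hσS : σ ∈ S) (f : G × ↥S → ℤ) : Fin (S.card - 1) → G → ℤ :=
  fun i g => f (g, ⟨((idx σ S hσS).symm i : G),
    Finset.mem_of_mem_erase ((idx σ S hσS).symm i).2⟩)

variable {σ S}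

lemma corr_congr {f f' : G × ↥S → ℤ} (hff' : ∀ e : G × ↥S, (e.2 : G) ≠ σ → f e = f' e)
    (h : G) : corr σ S f h = corr σ S f' h := by
  refine Finset.sum_congr rfl (fun e _ => ?_)
  by_cases hc : (e.2 : G) ≠ σ ∧ dlog σ ((e.2 : G)⁻¹ * e.1⁻¹ * h) < dlog σ (e.2 : G)⁻¹
  · rw [if_pos hc, if_pos hc, hff' e hc.1]
  · rw [if_neg hc, if_neg hc]

lemma Fflow_nonsigma (hσS : σ ∈ S) (a : ℤ) (b : Fin (S.card - 1) → G → ℤ)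
    (e : G × ↥S) (he : (e.2 : G) ≠ σ) :
    Fflow σ S hσS a b e = Bfun σ S hσS b e := by
  simp only [Fflow, Bfun]
  rw [dif_neg he, dif_neg he]

include hgen in
lemma Fflow_mem (hσS : σ ∈ S) (a : ℤ) (b : Fin (S.card - 1) → G → ℤ) :
    Fflow σ S hσS a b ∈ LinearMap.ker (cayley G S).boundary := by
  rw [LinearMap.mem_ker]
  funext v
  show (cayley G S).boundary (Fflow σ S hσS a b) v = 0
  rw [boundary_apply, ← Finset.sum_sub_distrib]
  have hX := corr_step hgen (Bfun σ S hσS b) (v * σ⁻¹)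
  rw [show v * σ⁻¹ * σ = v by group] at hX
  have hterm : ∀ s : ↥S, Fflow σ S hσS a b (v * (s : G)⁻¹, s) - Fflow σ S hσS a b (v, s)
      = (if (s : G) = σ then (corr σ S (Bfun σ S hσS b) (v * σ⁻¹) - corr σ S (Bfun σ S hσS b) v) else 0)
        + (if (s : G) ≠ σ then Bfun σ S hσS b (v * (s : G)⁻¹, s) - Bfun σ S hσS b (v, s) else 0) := by
    intro s
    by_cases hs : (s : G) = σ
    · rw [if_pos hs, if_neg (not_not_intro hs), add_zero,
        show Fflow σ S hσS a b (v * (s : G)⁻¹, s)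
          = a + corr σ S (Bfun σ S hσS b) (v * (s : G)⁻¹) from dif_pos hs,
        show Fflow σ S hσS a b (v, s) = a + corr σ S (Bfun σ S hσS b) v from dif_pos hs, hs]
      ring
    · rw [if_neg hs, if_pos hs, zero_add,
        Fflow_nonsigma hσS a b (v * (s : G)⁻¹, s) hs, Fflow_nonsigma hσS a b (v, s) hs]
  rw [Finset.sum_congr rfl (fun s _ => hterm s), Finset.sum_add_distrib,
    sum_ite_sigma hσS, ← hX]
  ring

lemma Afun_Fflow (hσS : σ ∈ S) (a : ℤ) (b : Fin (S.card - 1) → G → ℤ) (h : G) :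
    Afun σ S hσS (Fflow σ S hσS a b) h = a := by
  rw [Afun,
    show Fflow σ S hσS a b (h, ⟨σ, hσS⟩) = a + corr σ S (Bfun σ S hσS b) h from dif_pos rfl,
    corr_congr (f := Fflow σ S hσS a b) (f' := Bfun σ S hσS b)
      (fun e he => Fflow_nonsigma hσS a b e he) h]
  ring

lemma bOf_Fflow (hσS : σ ∈ S) (a : ℤ) (b : Fin (S.card - 1) → G → ℤ) :
    bOf σ S hσS (Fflow σ S hσS a b) = b := by
  funext i g
  simp only [bOf, Fflow]
  have hne : (((idx σ S hσS).symm i : ↥(S.erase σ)) : G) ≠ σ :=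
    (Finset.mem_erase.mp ((idx σ S hσS).symm i).2).1
  rw [dif_neg hne]
  have h2 : ∀ pf : (((idx σ S hσS).symm i : ↥(S.erase σ)) : G) ∈ S.erase σ,
      (⟨(((idx σ S hσS).symm i : ↥(S.erase σ)) : G), pf⟩ : ↥(S.erase σ))
        = (idx σ S hσS).symm i := fun pf => Subtype.ext rfl
  rw [h2, Equiv.apply_symm_apply]

lemma Bfun_bOf (hσS : σ ∈ S) (f : G × ↥S → ℤ) (e : G × ↥S) (he : (e.2 : G) ≠ σ) :
    Bfun σ S hσS (bOf σ S hσS f) e = f e := by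
  simp only [Bfun, bOf]
  rw [dif_neg he]
  refine congrArg f (Prod.ext rfl (Subtype.ext ?_))
  show ((((idx σ S hσS).symm ((idx σ S hσS) ⟨(e.2 : G), Finset.mem_erase.mpr ⟨he, e.2.2⟩⟩))
      : ↥(S.erase σ)) : G) = (e.2 : G)
  rw [Equiv.symm_apply_apply]

include hgen in
lemma Fflow_eq (hσS : σ ∈ S) {f : G × ↥S → ℤ}
    (hf : f ∈ LinearMap.ker (cayley G S).boundary) :
    Fflow σ S hσS (Afun σ S hσS f 1) (bOf σ S hσS f) = f := by
  funext e
  by_cases hs : (e.2 : G) = σ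
  · rw [show Fflow σ S hσS (Afun σ S hσS f 1) (bOf σ S hσS f) e
        = Afun σ S hσS f 1 + corr σ S (Bfun σ S hσS (bOf σ S hσS f)) e.1 from dif_pos hs,
      corr_congr (fun e' he' => Bfun_bOf hσS f e' he') e.1,
      ← Afun_const hgen hσS hf e.1, Afun, sub_add_cancel]
    exact congrArg f (Prod.ext rfl (Subtype.ext hs.symm))
  · rw [Fflow_nonsigma hσS _ _ e hs, Bfun_bOf hσS f e hs]

end Flow

section Equivariance

set_option linter.unusedSectionVars false
set_option maxHeartbeats 1000000

variable {G : Type*} [Group G] [Fintype G] [DecidableEq G]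
variable {σ : G} {S : Finset G}

lemma corr_add (f f' : G × ↥S → ℤ) (h : G) :
    corr σ S (f + f') h = corr σ S f h + corr σ S f' h := by
  rw [corr, corr, corr, ← Finset.sum_add_distrib]
  refine Finset.sum_congr rfl (fun e _ => ?_)
  by_cases hc : (e.2 : G) ≠ σ ∧ dlog σ ((e.2 : G)⁻¹ * e.1⁻¹ * h) < dlog σ (e.2 : G)⁻¹
  · rw [if_pos hc, if_pos hc, if_pos hc]; rfl
  · rw [if_neg hc, if_neg hc, if_neg hc]; simp

lemma eshift_cayAct (g : G) (f : G × ↥S → ℤ) (e : G × ↥S) :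
    eshift (cayAct G ↥S g) f e = f (g⁻¹ * e.1, e.2) := by
  simp only [eshift, cayAct, Equiv.Perm.inv_def, MonoidHom.coe_mk, OneHom.coe_mk,
    Equiv.prodCongr_symm, Equiv.mulLeft_symm, Equiv.refl_symm, Equiv.prodCongr_apply,
    Equiv.coe_mulLeft, Equiv.refl_apply, Prod.map_apply]
  rfl

lemma corr_shift (f : G × ↥S → ℤ) (g h : G) :
    corr σ S (fun e => f (g⁻¹ * e.1, e.2)) h = corr σ S f (g⁻¹ * h) := by
  rw [corr, corr, ← Equiv.sum_comp (Equiv.prodCongr (Equiv.mulLeft g⁻¹) (Equiv.refl ↥S))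
      (fun e : G × ↥S => if (e.2 : G) ≠ σ ∧
        dlog σ ((e.2 : G)⁻¹ * e.1⁻¹ * (g⁻¹ * h)) < dlog σ (e.2 : G)⁻¹ then f e else 0)]
  refine Finset.sum_congr rfl (fun e _ => ?_)
  have hpe : (Equiv.prodCongr (Equiv.mulLeft g⁻¹) (Equiv.refl ↥S)) e = (g⁻¹ * e.1, e.2) := rfl
  rw [hpe]
  simp only [show (e.2 : G)⁻¹ * (g⁻¹ * e.1)⁻¹ * (g⁻¹ * h)
      = (e.2 : G)⁻¹ * e.1⁻¹ * h by group]

lemma Afun_shift (hσS : σ ∈ S) (f : G × ↥S → ℤ) (g h : G) :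
    Afun σ S hσS (fun e => f (g⁻¹ * e.1, e.2)) h = Afun σ S hσS f (g⁻¹ * h) := by
  rw [Afun, Afun, corr_shift]

variable (hgen : ∀ x : G, x ∈ Subgroup.zpowers σ)

/-- The main isomorphism `Fl(Cay(G,S)) ≃ ℤ × (ℤG)^{|S|-1}`. -/
noncomputable def flowEquiv (hσS : σ ∈ S) :
    ↥(LinearMap.ker (cayley G S).boundary) ≃+ ℤ × (Fin (S.card - 1) → (G → ℤ)) where
  toFun f := (Afun σ S hσS ↑f 1, bOf σ S hσS ↑f)
  invFun p := ⟨Fflow σ S hσS p.1 p.2, Fflow_mem hgen hσS p.1 p.2⟩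
  left_inv f := Subtype.ext (Fflow_eq hgen hσS f.2)
  right_inv p := Prod.ext (Afun_Fflow hσS p.1 p.2 1) (bOf_Fflow hσS p.1 p.2)
  map_add' x y := by
    have hco : ((x + y : ↥(LinearMap.ker (cayley G S).boundary)) : G × ↥S → ℤ)
        = ↑x + ↑y := rfl
    refine Prod.ext ?_ ?_
    · show Afun σ S hσS ↑(x + y) 1 = Afun σ S hσS ↑x 1 + Afun σ S hσS ↑y 1
      rw [hco, Afun, Afun, Afun, corr_add]
      show (↑x : G × ↥S → ℤ) (1, ⟨σ, hσS⟩) + (↑y : G × ↥S → ℤ) (1, ⟨σ, hσS⟩) - _ = _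
      ring
    · rfl

lemma flowEquiv_spec (hσS : σ ∈ S) (g : G)
    (f : ↥(LinearMap.ker (cayley G S).boundary)) :
    ((flowEquiv hgen hσS (flowRep (cayley G S) (MulAction.toPermHom G G) (cayAct G ↥S)
        (cayley_src_equivariant G S) (cayley_tgt_equivariant G S) g f)).1
      = (flowEquiv hgen hσS f).1)
    ∧ ((flowEquiv hgen hσS (flowRep (cayley G S) (MulAction.toPermHom G G) (cayAct G ↥S)
        (cayley_src_equivariant G S) (cayley_tgt_equivariant G S) g f)).2
      = fun i x => (flowEquiv hgen hσS f).2 i (g⁻¹ * x)) := by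
  have hesh : eshift (cayAct G ↥S g) (↑f : G × ↥S → ℤ)
      = fun e => (↑f : G × ↥S → ℤ) (g⁻¹ * e.1, e.2) := by
    funext e; exact eshift_cayAct g _ e
  constructor
  · show Afun σ S hσS (eshift (cayAct G ↥S g) ↑f) 1 = Afun σ S hσS (↑f) 1
    rw [hesh, Afun_shift, mul_one]
    exact Afun_const hgen hσS f.2 g⁻¹
  · show bOf σ S hσS (eshift (cayAct G ↥S g) ↑f)
      = fun i x => bOf σ S hσS (↑f : G × ↥S → ℤ) i (g⁻¹ * x)
    funext i x
    simp only [bOf]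
    exact eshift_cayAct g ((f : ↥(LinearMap.ker (cayley G S).boundary)) : G × ↥S → ℤ) _

end Equivariance

section Assembly

set_option linter.unusedSectionVars false

/-- Projection onto the first factor when the second is trivial. -/
noncomputable def prodUniqueFst {B : Type*} [AddCommGroup B] [Unique B] : ℤ × B ≃+ ℤ where
  toFun p := p.1
  invFun a := (a, 0)
  left_inv p := Prod.ext rfl (Subsingleton.elim _ _)
  right_inv a := rfl
  map_add' p q := rfl

variable {G : Type*} [Group G] [Fintype G] [DecidableEq G]

/-- Packing `ℤ × (Fin m → G → ℤ)` as functions on a plain (universe-0) index type. -/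
noncomputable def packEquiv (m : ℕ) (eqG : G ≃ Fin (Fintype.card G)) :
    (ℤ × (Fin m → G → ℤ)) ≃+ ((Unit ⊕ (Fin m × Fin (Fintype.card G))) → ℤ) where
  toFun p := Sum.elim (fun _ => p.1) (fun q => p.2 q.1 (eqG.symm q.2))
  invFun F := (F (Sum.inl ()), fun i g => F (Sum.inr (i, eqG g)))
  left_inv p := by
    refine Prod.ext rfl ?_
    funext i g
    simp
  right_inv F := by
    funext i
    rcases i with u | ⟨j, x⟩
    · rfl
    · simp
  map_add' p q := by
    funext i
    rcases i with u | ⟨j, x⟩ <;> rfl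

/-- The permutation action of `G` on `Unit ⊕ (Fin m × Fin |G|)`. -/
noncomputable def sumAct (m : ℕ) (eqG : G ≃ Fin (Fintype.card G)) :
    G →* Equiv.Perm (Unit ⊕ (Fin m × Fin (Fintype.card G))) where
  toFun g := Equiv.sumCongr (Equiv.refl Unit)
    (Equiv.prodCongr (Equiv.refl (Fin m)) (eqG.permCongr (Equiv.mulLeft g)))
  map_one' := by
    ext i
    rcases i with u | ⟨j, x⟩ <;>
      simp [Equiv.permCongr_apply, Equiv.coe_mulLeft]
  map_mul' g h := by
    ext i
    rcases i with u | ⟨j, x⟩ <;>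
      simp [Equiv.permCongr_apply, Equiv.coe_mulLeft, mul_assoc]

end Assembly

/-- For a finite cyclic group `G = ⟨σ⟩`:
the flow lattice of `Cay(G, {σ})` is `ℤ` with the trivial `G`-action; and for any
`S ⊆ G` containing `σ`, `Fl(Cay(G, S)) ≅ ℤ ⊕ (ℤG)^{|S|-1}` as `G`-lattices — in
particular the flow lattice of `Cay(G, S)` is a permutation `G`-lattice. -/
theorem flow_lattice_of_cyclic_cayley {G : Type*} [Group G] [Fintype G] [DecidableEq G]
    (σ : G) (hgen : ∀ x : G, x ∈ Subgroup.zpowers σ)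
    (S : Finset G) (hσS : σ ∈ S) :
    (∃ ψ : ↥(LinearMap.ker (cayley G {σ}).boundary) ≃+ ℤ,
      ∀ (g : G) (f : ↥(LinearMap.ker (cayley G {σ}).boundary)),
        ψ (flowRep (cayley G {σ}) (MulAction.toPermHom G G) (cayAct G ↥({σ} : Finset G))
            (cayley_src_equivariant G {σ}) (cayley_tgt_equivariant G {σ}) g f) = ψ f) ∧
    (∃ φ : ↥(LinearMap.ker (cayley G S).boundary) ≃+
        ℤ × (Fin (S.card - 1) → (G → ℤ)),
      ∀ (g : G) (f : ↥(LinearMap.ker (cayley G S).boundary)),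
        ((φ (flowRep (cayley G S) (MulAction.toPermHom G G) (cayAct G ↥S)
            (cayley_src_equivariant G S) (cayley_tgt_equivariant G S) g f)).1 = (φ f).1) ∧
        ((φ (flowRep (cayley G S) (MulAction.toPermHom G G) (cayAct G ↥S)
            (cayley_src_equivariant G S) (cayley_tgt_equivariant G S) g f)).2
          = fun i x => (φ f).2 i (g⁻¹ * x))) ∧
    IsPermutationRep (flowRep (cayley G S) (MulAction.toPermHom G G) (cayAct G ↥S)
        (cayley_src_equivariant G S) (cayley_tgt_equivariant G S)) := by
  have hσ1 : σ ∈ ({σ} : Finset G) := Finset.mem_singleton_self σ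
  refine ⟨?_, ?_, ?_⟩
  · haveI : IsEmpty (Fin (({σ} : Finset G).card - 1)) := by
      rw [Finset.card_singleton]
      exact Fin.isEmpty
    refine ⟨(flowEquiv hgen hσ1).trans prodUniqueFst, fun g f => ?_⟩
    exact (flowEquiv_spec hgen hσ1 g f).1
  · exact ⟨flowEquiv hgen hσS, fun g f => flowEquiv_spec hgen hσS g f⟩
  · refine ⟨Unit ⊕ (Fin (S.card - 1) × Fin (Fintype.card G)), inferInstance,
      sumAct (S.card - 1) (Fintype.equivFin G),
      (flowEquiv hgen hσS).trans (packEquiv (S.card - 1) (Fintype.equivFin G)),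
      fun g f => ?_⟩
    funext i
    rcases i with u | ⟨j, x⟩
    · show ((flowEquiv hgen hσS) (flowRep (cayley G S) (MulAction.toPermHom G G) (cayAct G ↥S)
          (cayley_src_equivariant G S) (cayley_tgt_equivariant G S) g f)).1
        = ((flowEquiv hgen hσS) f).1
      exact (flowEquiv_spec hgen hσS g f).1
    · show ((flowEquiv hgen hσS) (flowRep (cayley G S) (MulAction.toPermHom G G) (cayAct G ↥S)
          (cayley_src_equivariant G S) (cayley_tgt_equivariant G S) g f)).2 j
            ((Fintype.equivFin G).symm x)
        = ((flowEquiv hgen hσS) f).2 j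
            ((Fintype.equivFin G).symm ((Fintype.equivFin G) (g⁻¹ * (Fintype.equivFin G).symm x)))
      rw [(flowEquiv_spec hgen hσS g f).2, Equiv.symm_apply_apply]
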